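/- For every x ∈ {1,…,m} and every n ≥ 0, the subspace Ĉ^n_x consists of nontrivial cocycles: Ĉ^n_x ⊆ ker(D_x : C^n_x → C^{n+1}_x) and Ĉ^n_x ∩ im(D_x : C^{n−1}_x → C^n_x) = 0 (here D_x means D_{e_1} when x = 1). -/

import Mathlib

open Finsupp Submodule LinearMap

set_option maxSynthPendingDepth 2

namespace NilpotentCohomology

/-- The big space of cochains of all degrees: formal ℂ-linear combinations of
basis symbols `φ^I_x` indexed by a multi-index `I : List (Fin m)` and an output
index `x : Fin m`. -/
abbrev Cochain (m : ℕ) : Type := (List (Fin m) × Fin m) →₀ ℂ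

/-- Parity of an index: `0` if the index is among the first `r` (even) ones, `1` otherwise. -/
def par (r : ℕ) {m : ℕ} (i : Fin m) : ℕ := if (i : ℕ) < r then 0 else 1

/-- Parity of a multi-index: the sum of the parities of its entries. -/
def lpar (r : ℕ) {m : ℕ} (I : List (Fin m)) : ℕ := (I.map (par r)).sum

/-- Parity of a basis cochain `φ^I_x`: `|I| + |x|`. -/
def ppar (r : ℕ) {m : ℕ} (p : List (Fin m) × Fin m) : ℕ := lpar r p.1 + par r p.2

/-- `(I, J, k)`: the multi-index `I` with its `k`-th entry (0-indexed) replaced by the string `J`. -/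
def insertAt {m : ℕ} (I J : List (Fin m)) (k : ℕ) : List (Fin m) :=
  I.take k ++ J ++ I.drop (k + 1)

/-- The insertion product of two basis cochains `φ^I_x ∘ φ^J_y`. -/
noncomputable def basisComp (r : ℕ) {m : ℕ} (p q : List (Fin m) × Fin m) : Cochain m :=
  ∑ k : Fin p.1.length,
    if p.1.get k = q.2 then
      ((-1 : ℂ) ^ (lpar r (p.1.take ((k : ℕ) + 1)) * ppar r q)) •
        Finsupp.single (insertAt p.1 q.1 (k : ℕ), p.2) (1 : ℂ)
    else 0

/-- The insertion product, extended bilinearly. -/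
noncomputable def comp (r : ℕ) {m : ℕ} :
    Cochain m →ₗ[ℂ] Cochain m →ₗ[ℂ] Cochain m :=
  Finsupp.lsum ℂ fun p => LinearMap.toSpanSingleton ℂ _
    (Finsupp.lsum ℂ fun q => LinearMap.toSpanSingleton ℂ (Cochain m) (basisComp r p q))

/-- The bracket `[φ, ψ] = φ∘ψ − (−1)^{|φ||ψ|} ψ∘φ` of two parity-homogeneous cochains
of parities `pf` and `pg`. -/
noncomputable def bracket (r : ℕ) {m : ℕ} (pf pg : ℕ) (f g : Cochain m) : Cochain m :=
  comp r f g - ((-1 : ℂ) ^ (pf * pg)) • comp r g f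

/-- The quadratic cochain `φ^{(a,a)}_b`. -/
noncomputable def dd {m : ℕ} (a b : Fin m) : Cochain m :=
  Finsupp.single ([a, a], b) (1 : ℂ)

/-- The linear map multiplying each basis cochain by `(−1)^{its parity}`. -/
noncomputable def twist (r : ℕ) {m : ℕ} : Cochain m →ₗ[ℂ] Cochain m :=
  Finsupp.lsum ℂ fun p => LinearMap.toSpanSingleton ℂ (Cochain m)
    (((-1 : ℂ) ^ (ppar r p)) • Finsupp.single p (1 : ℂ))

/-- The coboundary operator `D(φ) = [d, φ] = d∘φ − (−1)^{|d||φ|} φ∘d` for the odd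
codifferential `d = φ^{(a,a)}_b`, extended linearly from parity-homogeneous `φ`. -/
noncomputable def Dop (r : ℕ) {m : ℕ} (a b : Fin m) : Cochain m →ₗ[ℂ] Cochain m :=
  comp r (dd a b) - ((comp r).flip (dd a b)) ∘ₗ twist r

/-- `C^n`: the span of the basis cochains `φ^I_x` with `I` of length `n`. -/
noncomputable def Cn (m n : ℕ) : Submodule ℂ (Cochain m) :=
  Submodule.span ℂ
    {f | ∃ I : List (Fin m), I.length = n ∧ ∃ x : Fin m, f = Finsupp.single (I, x) 1}

/-- `C^n_x`: the span of the basis cochains `φ^I_x` with `I` of length `n` and output `x`. -/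
noncomputable def Cnx (m : ℕ) (n : ℕ) (x : Fin m) : Submodule ℂ (Cochain m) :=
  Submodule.span ℂ
    {f | ∃ I : List (Fin m), I.length = n ∧ f = Finsupp.single (I, x) 1}

/-- The projection onto the cochains with output index `x`. -/
noncomputable def projOut {m : ℕ} (x : Fin m) : Cochain m →ₗ[ℂ] Cochain m :=
  Finsupp.lsum ℂ fun p => LinearMap.toSpanSingleton ℂ (Cochain m)
    (if p.2 = x then Finsupp.single p (1 : ℂ) else 0)

/-- `λ^J (φ^I_x) = φ^{JI}_x`, extended linearly. -/
noncomputable def lam {m : ℕ} (J : List (Fin m)) : Cochain m →ₗ[ℂ] Cochain m :=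
  Finsupp.lsum ℂ fun p => LinearMap.toSpanSingleton ℂ (Cochain m)
    (Finsupp.single (J ++ p.1, p.2) (1 : ℂ))

/-- `ρ^J (φ^I_x) = (−1)^{|I||J|} φ^{IJ}_x`, extended linearly. -/
noncomputable def rho (r : ℕ) {m : ℕ} (J : List (Fin m)) : Cochain m →ₗ[ℂ] Cochain m :=
  Finsupp.lsum ℂ fun p => LinearMap.toSpanSingleton ℂ (Cochain m)
    (((-1 : ℂ) ^ (lpar r p.1 * lpar r J)) • Finsupp.single (p.1 ++ J, p.2) (1 : ℂ))

/-- `θ = λ^{(a,b)} − λ^{(b,a)}`. -/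
noncomputable def theta {m : ℕ} (a b : Fin m) : Cochain m →ₗ[ℂ] Cochain m :=
  lam [a, b] - lam [b, a]

/-- `τ`: swaps the outputs `a` and `b` of basis cochains (identity on other outputs). -/
noncomputable def tau {m : ℕ} (a b : Fin m) : Cochain m →ₗ[ℂ] Cochain m :=
  Finsupp.lsum ℂ fun p => LinearMap.toSpanSingleton ℂ (Cochain m)
    (Finsupp.single (p.1, if p.2 = a then b else if p.2 = b then a else p.2) (1 : ℂ))

/-! ### Full cohomology -/

/-- Cocycles of degree `n` of the full complex. -/
noncomputable def Zfull (r : ℕ) {m : ℕ} (a b : Fin m) (n : ℕ) : Submodule ℂ (Cochain m) :=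
  Cn m n ⊓ LinearMap.ker (Dop r a b)

/-- Coboundaries of degree `n` of the full complex (`C^{-1} = 0`). -/
noncomputable def Bfull (r : ℕ) {m : ℕ} (a b : Fin m) : ℕ → Submodule ℂ (Cochain m)
  | 0 => ⊥
  | n + 1 => Submodule.map (Dop r a b) (Cn m n)

/-- The full cohomology `H^n = Z^n / B^n`. -/
noncomputable abbrev Hfull (r : ℕ) {m : ℕ} (a b : Fin m) (n : ℕ) : Type :=
  Zfull r a b n ⧸ (Bfull r a b n).comap (Zfull r a b n).subtype

/-! ### The restricted complexes -/

/-- The restricted differential `D_x`: the `e₁`-output component of `D` when `x = a`,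
and `D` itself (which preserves output `x`) otherwise. -/
noncomputable def Dx (r : ℕ) {m : ℕ} (a b x : Fin m) : Cochain m →ₗ[ℂ] Cochain m :=
  if x = a then projOut a ∘ₗ Dop r a b else Dop r a b

/-- Cocycles of the restricted complex `(C^•_x, D_x)`. -/
noncomputable def Zx (r : ℕ) {m : ℕ} (a b x : Fin m) (n : ℕ) : Submodule ℂ (Cochain m) :=
  Cnx m n x ⊓ LinearMap.ker (Dx r a b x)

/-- Coboundaries of the restricted complex `(C^•_x, D_x)` (`C^{-1}_x = 0`). -/
noncomputable def Bx (r : ℕ) {m : ℕ} (a b x : Fin m) : ℕ → Submodule ℂ (Cochain m)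
  | 0 => ⊥
  | n + 1 => Submodule.map (Dx r a b x) (Cnx m n x)

/-- Cohomology `H^n_x` of the restricted complex `(C^•_x, D_x)`. -/
noncomputable abbrev Hx (r : ℕ) {m : ℕ} (a b x : Fin m) (n : ℕ) : Type :=
  Zx r a b x n ⧸ (Bx r a b x n).comap (Zx r a b x n).subtype

/-! ### The subcomplex `C^•_a ⊕ C^•_b` and the `b`-output complex -/

/-- `C^n_a ⊕ C^n_b` (internal direct sum). -/
noncomputable def Cpair (m : ℕ) (a b : Fin m) (n : ℕ) : Submodule ℂ (Cochain m) :=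
  Cnx m n a ⊔ Cnx m n b

noncomputable def Zpair (r : ℕ) {m : ℕ} (a b : Fin m) (n : ℕ) : Submodule ℂ (Cochain m) :=
  Cpair m a b n ⊓ LinearMap.ker (Dop r a b)

noncomputable def Bpair (r : ℕ) {m : ℕ} (a b : Fin m) : ℕ → Submodule ℂ (Cochain m)
  | 0 => ⊥
  | n + 1 => Submodule.map (Dop r a b) (Cpair m a b n)

/-- `H^n`: the cohomology of the subcomplex `(C^•_a ⊕ C^•_b, D)`. -/
noncomputable abbrev Hpair (r : ℕ) {m : ℕ} (a b : Fin m) (n : ℕ) : Type :=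
  Zpair r a b n ⧸ (Bpair r a b n).comap (Zpair r a b n).subtype

/-- Cocycles of `(C^•_b, D_b)`, where `D_b` is the restriction of `D`. -/
noncomputable def Zm (r : ℕ) {m : ℕ} (a b : Fin m) (n : ℕ) : Submodule ℂ (Cochain m) :=
  Cnx m n b ⊓ LinearMap.ker (Dop r a b)

noncomputable def Bm (r : ℕ) {m : ℕ} (a b : Fin m) : ℕ → Submodule ℂ (Cochain m)
  | 0 => ⊥
  | n + 1 => Submodule.map (Dop r a b) (Cnx m n b)

/-- `H^n_b`: the cohomology of `(C^•_b, D_b)`. -/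
noncomputable abbrev Hm (r : ℕ) {m : ℕ} (a b : Fin m) (n : ℕ) : Type :=
  Zm r a b n ⧸ (Bm r a b n).comap (Zm r a b n).subtype

lemma Zm_le_Zpair (r : ℕ) {m : ℕ} (a b : Fin m) (n : ℕ) :
    Zm r a b n ≤ Zpair r a b n :=
  inf_le_inf le_sup_right le_rfl

lemma Bm_le_Bpair (r : ℕ) {m : ℕ} (a b : Fin m) : ∀ n : ℕ, Bm r a b n ≤ Bpair r a b n
  | 0 => bot_le
  | _ + 1 => Submodule.map_mono le_sup_right

/-- The natural map `H^n_b → H^n` induced by the inclusion of cocycles. -/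
noncomputable def iotaHm (r : ℕ) {m : ℕ} (a b : Fin m) (n : ℕ) :
    Hm r a b n →ₗ[ℂ] Hpair r a b n :=
  Submodule.mapQ _ _ (Submodule.inclusion (Zm_le_Zpair r a b n))
    (fun z hz => Bm_le_Bpair r a b n hz)

/-- `Ĥ^n_f`: the image of `H^n_b` in `H^n`. -/
noncomputable def Hfhat (r : ℕ) {m : ℕ} (a b : Fin m) (n : ℕ) : Submodule ℂ (Hpair r a b n) :=
  LinearMap.range (iotaHm r a b n)

/-- `Ĥ^n_e = H^n / Ĥ^n_f`. -/
noncomputable abbrev Hehat (r : ℕ) {m : ℕ} (a b : Fin m) (n : ℕ) : Type :=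
  Hpair r a b n ⧸ Hfhat r a b n

/-! ### The spaces `Ĉ^n_x` of nontrivial cocycles -/

/-- The recursively defined subspaces `Ĉ^n_x` of nontrivial cocycles. -/
noncomputable def Chat (r : ℕ) {m : ℕ} (a b x : Fin m) : ℕ → Submodule ℂ (Cochain m)
  | 0 => Submodule.span ℂ {Finsupp.single (([] : List (Fin m)), x) 1}
  | 1 => Submodule.span ℂ
      ({Finsupp.single ([a], x) 1} ∪
        ⋃ c ∈ {c : Fin m | c ≠ a ∧ c ≠ b}, lam [c] '' (Chat r a b x 0 : Set (Cochain m)))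
  | n + 2 => Submodule.span ℂ
      ((⋃ c ∈ {c : Fin m | c ≠ a ∧ c ≠ b},
          lam [c] '' (Chat r a b x (n + 1) : Set (Cochain m))) ∪
        (theta a b '' (Chat r a b x n : Set (Cochain m))) ∪
        ⋃ c ∈ {c : Fin m | c ≠ a ∧ c ≠ b},
          (lam [a] + rho r [a]) '' (lam [c] '' (Chat r a b x n : Set (Cochain m))))


section Aux
variable {m : ℕ}

lemma lpar_nil (r : ℕ) : lpar r ([] : List (Fin m)) = 0 := rfl
lemma lpar_cons (r : ℕ) (a : Fin m) (I : List (Fin m)) :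
    lpar r (a :: I) = par r a + lpar r I := rfl
lemma lpar_append (r : ℕ) (I J : List (Fin m)) :
    lpar r (I ++ J) = lpar r I + lpar r J := by simp [lpar]

lemma lam_single (J : List (Fin m)) (p : List (Fin m) × Fin m) (b : ℂ) :
    lam J (Finsupp.single p b) = Finsupp.single (J ++ p.1, p.2) b := by
  simp [lam, Finsupp.smul_single]

lemma rho_single (r : ℕ) (J : List (Fin m)) (p : List (Fin m) × Fin m) (b : ℂ) :
    rho r J (Finsupp.single p b)
      = ((-1 : ℂ) ^ (lpar r p.1 * lpar r J)) • Finsupp.single (p.1 ++ J, p.2) b := by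
  simp [rho, Finsupp.smul_single, mul_comm]

lemma projOut_single (x : Fin m) (p : List (Fin m) × Fin m) (b : ℂ) :
    projOut x (Finsupp.single p b) = if p.2 = x then Finsupp.single p b else 0 := by
  simp [projOut, apply_ite (fun v : Cochain m => b • v), Finsupp.smul_single]

lemma twist_single (r : ℕ) (p : List (Fin m) × Fin m) (b : ℂ) :
    twist r (Finsupp.single p b) = ((-1 : ℂ) ^ (ppar r p)) • Finsupp.single p b := by
  simp [twist, Finsupp.smul_single, mul_comm]

lemma comp_single_single (r : ℕ) (p q : List (Fin m) × Fin m) :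
    comp r (Finsupp.single p 1) (Finsupp.single q 1) = basisComp r p q := by
  simp [comp]

end Aux
section Aux2
variable {m : ℕ}

/-- The "right action" part of the differential on a basis monomial. -/
noncomputable def Rpart (r : ℕ) (e1 fs x : Fin m) (I : List (Fin m)) : Cochain m :=
  ∑ k : Fin I.length,
    if I.get k = fs then
      ((-1 : ℂ) ^ (ppar r (I, x) + lpar r (I.take ((k : ℕ) + 1)))) •
        Finsupp.single (insertAt I [e1, e1] (k : ℕ), x) (1 : ℂ)
    else 0

variable {r : ℕ} {e1 fs : Fin m} (hpe : par r e1 = 0) (hpf : par r fs = 1)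

include hpe hpf in
lemma Dop_single (x : Fin m) (I : List (Fin m)) :
    Dop r e1 fs (Finsupp.single (I, x) 1)
      = (if e1 = x then
          Finsupp.single (I ++ [e1], fs) 1 + Finsupp.single (e1 :: I, fs) 1 else 0)
        - Rpart r e1 fs x I := by
  have h1 : comp r (dd e1 fs) (Finsupp.single (I, x) 1)
      = (if e1 = x then
          Finsupp.single (I ++ [e1], fs) 1 + Finsupp.single (e1 :: I, fs) 1 else 0) := by
    rw [dd, comp_single_single, basisComp]
    simp only [Fin.sum_univ_two]
    simp [Fin.sum_univ_succ, insertAt, lpar, ppar, hpe, List.take, List.drop]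
    split_ifs <;> simp
  have h2 : comp r (Finsupp.single (I, x) 1) (dd e1 fs)
      = ∑ k : Fin I.length,
          if I.get k = fs then
            ((-1 : ℂ) ^ (lpar r (I.take ((k : ℕ) + 1)))) •
              Finsupp.single (insertAt I [e1, e1] (k : ℕ), x) (1 : ℂ)
          else 0 := by
    rw [dd, comp_single_single, basisComp]
    refine Finset.sum_congr rfl fun k _ => ?_
    have : ppar r ([e1, e1], fs) = 1 := by simp [ppar, lpar, hpe, hpf]
    simp [this]
  rw [Dop]
  simp only [LinearMap.sub_apply, LinearMap.comp_apply, LinearMap.flip_apply, twist_single,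
    map_smul, h1, h2, Rpart]
  congr 1
  rw [Finset.smul_sum]
  refine Finset.sum_congr rfl fun k _ => ?_
  rw [smul_ite, smul_smul, ← pow_add, smul_zero]

include hpe hpf in
lemma Dx_single (hef : e1 ≠ fs) (x : Fin m) (I : List (Fin m)) :
    Dx r e1 fs x (Finsupp.single (I, x) 1) = - Rpart r e1 fs x I := by
  rw [Dx]
  split_ifs with h
  · rw [h, LinearMap.comp_apply, Dop_single hpe hpf, map_sub, if_pos rfl, map_add,
      projOut_single, projOut_single]
    simp only [if_neg (Ne.symm hef)]
    set x := e1
    have : projOut x (Rpart r e1 fs x I) = Rpart r e1 fs x I := by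
      rw [Rpart, map_sum]
      refine Finset.sum_congr rfl fun k _ => ?_
      rw [apply_ite (projOut x), map_zero, map_smul, projOut_single, if_pos rfl]
    rw [this]; abel
  · rw [Dop_single hpe hpf, if_neg (fun hh => h hh.symm), zero_sub]

end Aux2
section Aux3
variable {m : ℕ} {r : ℕ} {e1 fs : Fin m}
  (hpe : par r e1 = 0) (hpf : par r fs = 1)

lemma npow_helper (a b : ℕ) : (-1 : ℂ) ^ (2 * a + b) = (-1 : ℂ) ^ b := by
  rw [pow_add, pow_mul, neg_one_sq, one_pow, one_mul]

lemma Rpart_nil (x : Fin m) : Rpart r e1 fs x [] = 0 := by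
  simp [Rpart]

lemma Rpart_zero (x : Fin m) {I : List (Fin m)} (h : fs ∉ I) :
    Rpart r e1 fs x I = 0 := by
  rw [Rpart]
  refine Finset.sum_eq_zero fun k _ => ?_
  rw [if_neg]
  simp only [List.get_eq_getElem]
  intro hk
  exact h (hk ▸ List.getElem_mem _)

include hpf in
lemma Rpart_cons (x c : Fin m) (I : List (Fin m)) :
    Rpart r e1 fs x (c :: I)
      = (if c = fs then ((-1 : ℂ) ^ (ppar r (I, x))) •
            Finsupp.single (e1 :: e1 :: I, x) (1 : ℂ) else 0)
        + lam [c] (Rpart r e1 fs x I) := by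
  rw [Rpart]
  simp only [List.length_cons, Fin.sum_univ_succ]
  congr 1
  · simp only [List.get_eq_getElem, Fin.val_zero, List.getElem_cons_zero]
    rcases eq_or_ne c fs with h | h
    · subst h
      simp only [↓reduceIte]
      have he : ppar r (c :: I, x) + lpar r (List.take (0 + 1) (c :: I))
          = 2 * 1 + ppar r (I, x) := by
        simp [ppar, lpar_cons, lpar_nil, hpf, List.take] <;> omega
      rw [he, npow_helper]
      simp [insertAt]
    · simp only [h, ↓reduceIte]
  · rw [Rpart, map_sum]
    refine Finset.sum_congr rfl fun j _ => ?_
    rw [apply_ite (lam [c]), map_zero, map_smul, lam_single]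
    simp only [List.get_eq_getElem, Fin.val_succ, List.getElem_cons_succ]
    rcases eq_or_ne (I[(j : ℕ)]) fs with h | h
    · rw [if_pos h, if_pos h]
      have he : ppar r (c :: I, x) + lpar r (List.take ((j : ℕ) + 1 + 1) (c :: I))
          = 2 * par r c + (ppar r (I, x) + lpar r (List.take ((j : ℕ) + 1) I)) := by
        simp [ppar, lpar_cons, List.take_succ_cons] <;> omega
      rw [he, npow_helper]
      simp [insertAt, List.take_succ_cons, List.drop_succ_cons]
    · rw [if_neg h, if_neg h]

include hpe in
lemma Rpart_append_e1 (hef : e1 ≠ fs) (x : Fin m) (I : List (Fin m)) :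
    Rpart r e1 fs x (I ++ [e1]) = rho r [e1] (Rpart r e1 fs x I) := by
  have hl1 : lpar r [e1] = 0 := by simp [lpar, hpe]
  rw [Rpart]
  rw [← Fin.sum_congr' _ (show I.length + 1 = (I ++ [e1]).length from by simp)]
  rw [Fin.sum_univ_castSucc]
  simp only [Fin.coe_cast, Fin.coe_castSucc, Fin.val_last, List.get_eq_getElem]
  have hlast : (I ++ [e1])[(I.length : ℕ)]'(by simp) = e1 :=
    List.getElem_concat_length rfl _
  rw [hlast, if_neg hef, add_zero, Rpart, map_sum]
  refine Finset.sum_congr rfl fun k _ => ?_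
  rw [apply_ite (rho r [e1]), map_zero, map_smul, rho_single, hl1, mul_zero, pow_zero, one_smul]
  have hk : (k : ℕ) < I.length := k.isLt
  have hget : (I ++ [e1])[(k : ℕ)]'(by simp [hk]) = I[(k : ℕ)] :=
    List.getElem_append_left hk
  rw [hget]
  simp only [List.get_eq_getElem]
  rcases eq_or_ne (I[(k : ℕ)]) fs with h | h
  · rw [if_pos h, if_pos h]
    have e1' : ppar r (I ++ [e1], x) = ppar r (I, x) := by
      simp [ppar, lpar_append, hl1]
    have e2' : (I ++ [e1]).take ((k : ℕ) + 1) = I.take ((k : ℕ) + 1) :=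
      List.take_append_of_le_length (by omega)
    have e3' : insertAt (I ++ [e1]) [e1, e1] ((k : ℕ)) = insertAt I [e1, e1] (k : ℕ) ++ [e1] := by
      simp only [insertAt]
      rw [List.take_append_of_le_length (by omega), List.drop_append_of_le_length (by omega)]
      simp [List.append_assoc]
    rw [e1', e2', e3']
  · rw [if_neg h, if_neg h]

end Aux3
section Aux4
variable {m : ℕ} {r : ℕ} {e1 fs : Fin m}
  (hpe : par r e1 = 0) (hpf : par r fs = 1) (hef : e1 ≠ fs)

/-- The span of all basis monomials with output `x`. -/
noncomputable def Sx (m : ℕ) (x : Fin m) : Submodule ℂ (Cochain m) :=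
  Submodule.span ℂ {f | ∃ I : List (Fin m), f = Finsupp.single (I, x) 1}

lemma lam_lam (a b : Fin m) (g : Cochain m) :
    lam [a] (lam [b] g) = lam [a, b] g := by
  induction g using Finsupp.induction_linear with
  | zero => simp
  | add f g hf hg => simp [map_add, hf, hg]
  | single p c => simp [lam_single]

include hpe hpf hef in
lemma Dx_lam {x c : Fin m} (hc : c ≠ fs) {f : Cochain m} (hf : f ∈ Sx m x) :
    Dx r e1 fs x (lam [c] f) = lam [c] (Dx r e1 fs x f) := by
  induction hf using Submodule.span_induction with
  | mem g hg =>
    obtain ⟨I, rfl⟩ := hg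
    rw [lam_single, show (([c] ++ I : List (Fin m)), x) = ((c :: I : List (Fin m)), x) from rfl,
      Dx_single hpe hpf hef, Dx_single hpe hpf hef, Rpart_cons hpf, if_neg hc, zero_add, map_neg]
  | zero => simp
  | add f g _ _ hf hg => simp [map_add, hf, hg]
  | smul a f _ hf => simp [map_smul, hf]

include hpe hpf hef in
lemma Dx_rho {x : Fin m} {f : Cochain m} (hf : f ∈ Sx m x) :
    Dx r e1 fs x (rho r [e1] f) = rho r [e1] (Dx r e1 fs x f) := by
  have hl1 : lpar r [e1] = 0 := by simp [lpar, hpe]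
  induction hf using Submodule.span_induction with
  | mem g hg =>
    obtain ⟨I, rfl⟩ := hg
    rw [rho_single, hl1, mul_zero, pow_zero, one_smul, Dx_single hpe hpf hef,
      Dx_single hpe hpf hef, Rpart_append_e1 hpe hef, map_neg]
  | zero => simp
  | add f g _ _ hf hg => simp [map_add, hf, hg]
  | smul a f _ hf => simp [map_smul, hf]

include hpe hpf hef in
lemma Dx_theta {x : Fin m} {f : Cochain m} (hf : f ∈ Sx m x) :
    Dx r e1 fs x (theta e1 fs f) = theta e1 fs (Dx r e1 fs x f) := by
  induction hf using Submodule.span_induction with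
  | mem g hg =>
    obtain ⟨I, rfl⟩ := hg
    have h1 : theta e1 fs (Finsupp.single ((I : List (Fin m)), x) 1)
        = Finsupp.single ((e1 :: fs :: I : List (Fin m)), x) 1
          - Finsupp.single ((fs :: e1 :: I : List (Fin m)), x) 1 := by
      rw [theta, LinearMap.sub_apply, lam_single, lam_single]; rfl
    rw [h1, map_sub, Dx_single hpe hpf hef, Dx_single hpe hpf hef, Dx_single hpe hpf hef,
      Rpart_cons hpf, Rpart_cons hpf, Rpart_cons hpf, Rpart_cons hpf,
      if_neg hef, if_pos rfl, if_neg hef, if_pos rfl]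
    have hpp : ppar r ((e1 :: I : List (Fin m)), x) = ppar r ((I : List (Fin m)), x) := by
      simp [ppar, lpar_cons, hpe]
    rw [hpp]
    simp only [map_add, map_smul, lam_single, zero_add, map_zero, add_zero]
    rw [theta, map_neg, LinearMap.sub_apply, lam_lam, lam_lam]
    simp only [show ([e1] ++ (e1 :: e1 :: I) : List (Fin m)) = e1 :: e1 :: e1 :: I from rfl,
      show ([fs] ++ (e1 :: e1 :: I) : List (Fin m)) = fs :: e1 :: e1 :: I from rfl]
    abel
  | zero => simp
  | add f g _ _ hf hg => simp [map_add, hf, hg]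
  | smul a f _ hf => simp [map_smul, hf]

lemma lam_mem_Sx {x : Fin m} (J : List (Fin m)) {f : Cochain m} (hf : f ∈ Sx m x) :
    lam J f ∈ Sx m x := by
  induction hf using Submodule.span_induction with
  | mem g hg =>
    obtain ⟨I, rfl⟩ := hg
    rw [lam_single]
    exact Submodule.subset_span ⟨J ++ I, rfl⟩
  | zero => simp
  | add f g _ _ hf hg => rw [map_add]; exact add_mem hf hg
  | smul a f _ hf => rw [map_smul]; exact Submodule.smul_mem _ _ hf

lemma rho_mem_Sx {x : Fin m} (J : List (Fin m)) {f : Cochain m} (hf : f ∈ Sx m x) :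
    rho r J f ∈ Sx m x := by
  induction hf using Submodule.span_induction with
  | mem g hg =>
    obtain ⟨I, rfl⟩ := hg
    rw [rho_single]
    exact Submodule.smul_mem _ _ (Submodule.subset_span ⟨I ++ J, rfl⟩)
  | zero => simp
  | add f g _ _ hf hg => rw [map_add]; exact add_mem hf hg
  | smul a f _ hf => rw [map_smul]; exact Submodule.smul_mem _ _ hf

lemma theta_mem_Sx {x : Fin m} (a b : Fin m) {f : Cochain m} (hf : f ∈ Sx m x) :
    theta a b f ∈ Sx m x := by
  rw [theta, LinearMap.sub_apply]
  exact sub_mem (lam_mem_Sx _ hf) (lam_mem_Sx _ hf)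

lemma Chat_le_Sx (x : Fin m) : ∀ n, Chat r e1 fs x n ≤ Sx m x := by
  intro n
  induction n using Nat.strong_induction_on with
  | _ n ih =>
    match n with
    | 0 =>
      rw [Chat, Submodule.span_le]
      rintro f rfl
      exact Submodule.subset_span ⟨[], rfl⟩
    | 1 =>
      rw [Chat, Submodule.span_le]
      rintro f (rfl | hf)
      · exact Submodule.subset_span ⟨[e1], rfl⟩
      · simp only [Set.mem_iUnion] at hf
        obtain ⟨c, _, v, hv, rfl⟩ := hf
        exact lam_mem_Sx _ (ih 0 (by omega) hv)
    | (k + 2) =>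
      rw [Chat, Submodule.span_le]
      rintro f ((hf | hf) | hf)
      · simp only [Set.mem_iUnion] at hf
        obtain ⟨c, _, v, hv, rfl⟩ := hf
        exact lam_mem_Sx _ (ih (k + 1) (by omega) hv)
      · obtain ⟨v, hv, rfl⟩ := hf
        exact theta_mem_Sx _ _ (ih k (by omega) hv)
      · simp only [Set.mem_iUnion] at hf
        obtain ⟨c, _, v, hv, rfl⟩ := hf
        obtain ⟨w, hw, rfl⟩ := hv
        rw [LinearMap.add_apply]
        exact add_mem (lam_mem_Sx _ (lam_mem_Sx _ (ih k (by omega) hw)))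
          (rho_mem_Sx _ (lam_mem_Sx _ (ih k (by omega) hw)))

include hpe hpf hef in
lemma Chat_le_ker (x : Fin m) : ∀ n, Chat r e1 fs x n ≤ LinearMap.ker (Dx r e1 fs x) := by
  intro n
  induction n using Nat.strong_induction_on with
  | _ n ih =>
    match n with
    | 0 =>
      rw [Chat, Submodule.span_le]
      rintro f rfl
      rw [SetLike.mem_coe, LinearMap.mem_ker, Dx_single hpe hpf hef, Rpart_nil, neg_zero]
    | 1 =>
      rw [Chat, Submodule.span_le]
      rintro f (rfl | hf)
      · rw [SetLike.mem_coe, LinearMap.mem_ker, Dx_single hpe hpf hef,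
          Rpart_zero x (by simp [Ne.symm hef]), neg_zero]
      · simp only [Set.mem_iUnion] at hf
        obtain ⟨c, hc, v, hv, rfl⟩ := hf
        rw [SetLike.mem_coe, LinearMap.mem_ker,
          Dx_lam hpe hpf hef hc.2 (Chat_le_Sx x 0 hv),
          LinearMap.mem_ker.mp (ih 0 (by omega) hv), map_zero]
    | (k + 2) =>
      rw [Chat, Submodule.span_le]
      rintro f ((hf | hf) | hf)
      · simp only [Set.mem_iUnion] at hf
        obtain ⟨c, hc, v, hv, rfl⟩ := hf
        rw [SetLike.mem_coe, LinearMap.mem_ker,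
          Dx_lam hpe hpf hef hc.2 (Chat_le_Sx x (k + 1) hv),
          LinearMap.mem_ker.mp (ih (k + 1) (by omega) hv), map_zero]
      · obtain ⟨v, hv, rfl⟩ := hf
        rw [SetLike.mem_coe, LinearMap.mem_ker,
          Dx_theta hpe hpf hef (Chat_le_Sx x k hv),
          LinearMap.mem_ker.mp (ih k (by omega) hv), map_zero]
      · simp only [Set.mem_iUnion] at hf
        obtain ⟨c, hc, v, hv, rfl⟩ := hf
        obtain ⟨w, hw, rfl⟩ := hv
        have hgS : lam [c] w ∈ Sx m x := lam_mem_Sx _ (Chat_le_Sx x k hw)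
        have hg0 : Dx r e1 fs x (lam [c] w) = 0 := by
          rw [Dx_lam hpe hpf hef hc.2 (Chat_le_Sx x k hw),
            LinearMap.mem_ker.mp (ih k (by omega) hw), map_zero]
        rw [SetLike.mem_coe, LinearMap.mem_ker, LinearMap.add_apply, map_add,
          Dx_lam hpe hpf hef hef hgS, Dx_rho hpe hpf hef hgS, hg0, map_zero, map_zero, add_zero]

end Aux4
section Aux5
variable {m : ℕ}

/-- Projection killing all monomials whose multi-index contains `[e1,e1]` as an infix. -/
noncomputable def Pfree (e1 : Fin m) : Cochain m →ₗ[ℂ] Cochain m :=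
  Finsupp.lsum ℂ fun p => LinearMap.toSpanSingleton ℂ (Cochain m)
    (if [e1, e1] <:+: p.1 then 0 else Finsupp.single p 1)

/-- Extraction of the head letter `c`. -/
noncomputable def E1op (c : Fin m) : Cochain m →ₗ[ℂ] Cochain m :=
  Finsupp.lsum ℂ fun p => LinearMap.toSpanSingleton ℂ (Cochain m)
    (if p.1.head? = some c then Finsupp.single (p.1.tail, p.2) 1 else 0)

/-- Extraction of the two head letters `a`, `b`. -/
noncomputable def E2op (a b : Fin m) : Cochain m →ₗ[ℂ] Cochain m :=
  E1op b ∘ₗ E1op a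

lemma Pfree_single (e1 : Fin m) (p : List (Fin m) × Fin m) (b : ℂ) :
    Pfree e1 (Finsupp.single p b)
      = if [e1, e1] <:+: p.1 then 0 else Finsupp.single p b := by
  simp [Pfree, smul_ite, Finsupp.smul_single]

lemma E1op_single_cons (c a : Fin m) (I : List (Fin m)) (x : Fin m) (b : ℂ) :
    E1op c (Finsupp.single ((a :: I : List (Fin m)), x) b)
      = if a = c then Finsupp.single ((I : List (Fin m)), x) b else 0 := by
  simp [E1op, smul_ite, Finsupp.smul_single]

lemma E1op_single_nil (c : Fin m) (x : Fin m) (b : ℂ) :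
    E1op c (Finsupp.single (([] : List (Fin m)), x) b) = 0 := by
  simp [E1op]

lemma not_infix_nil (e1 : Fin m) : ¬ ([e1, e1] <:+: ([] : List (Fin m))) := by
  simp

lemma not_infix_single (e1 c : Fin m) : ¬ ([e1, e1] <:+: [c]) := by
  intro h
  have := h.length_le
  simp at this

lemma infix_cons_iff' {e1 c : Fin m} (hc : c ≠ e1) (J : List (Fin m)) :
    [e1, e1] <:+: (c :: J) ↔ [e1, e1] <:+: J := by
  constructor
  · intro h
    rcases List.infix_cons_iff.mp h with h | h
    · rcases List.cons_prefix_cons.mp h with ⟨h1, _⟩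
      exact absurd h1.symm hc
    · exact h
  · exact List.infix_cons

lemma infix_cons2_iff {e1 a : Fin m} (ha : a ≠ e1) (J : List (Fin m)) :
    [e1, e1] <:+: (e1 :: a :: J) ↔ [e1, e1] <:+: J := by
  constructor
  · intro h
    rcases List.infix_cons_iff.mp h with h | h
    · rcases List.cons_prefix_cons.mp h with ⟨_, h2⟩
      rcases List.cons_prefix_cons.mp h2 with ⟨h3, _⟩
      exact absurd h3.symm ha
    · exact (infix_cons_iff' ha J).mp h
  · intro h
    exact List.infix_cons (List.infix_cons h)

lemma infix_insertAt (e1 : Fin m) (I : List (Fin m)) (k : ℕ) :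
    [e1, e1] <:+: insertAt I [e1, e1] k := by
  rw [insertAt]
  exact List.infix_append _ _ _

lemma Pfree_Rpart (r : ℕ) (e1 fs x : Fin m) (I : List (Fin m)) :
    Pfree e1 (Rpart r e1 fs x I) = 0 := by
  rw [Rpart, map_sum]
  refine Finset.sum_eq_zero fun k _ => ?_
  rw [apply_ite (Pfree e1), map_zero, map_smul, Pfree_single,
    if_pos (infix_insertAt e1 I (k : ℕ)), smul_zero, ite_self]

variable {r : ℕ} {e1 fs : Fin m}
  (hpe : par r e1 = 0) (hpf : par r fs = 1) (hef : e1 ≠ fs)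

include hpe hpf hef in
lemma Bx_le_kerP (x : Fin m) : ∀ n, Bx r e1 fs x n ≤ LinearMap.ker (Pfree e1) := by
  intro n
  match n with
  | 0 => rw [Bx]; exact bot_le
  | n + 1 =>
    rw [Bx]
    rintro f ⟨g, hg, rfl⟩
    rw [LinearMap.mem_ker]
    induction hg using Submodule.span_induction with
    | mem g hg =>
      obtain ⟨I, _, rfl⟩ := hg
      rw [Dx_single hpe hpf hef, map_neg, Pfree_Rpart, neg_zero]
    | zero => simp
    | add f g _ _ hf hg => simp [map_add, hf, hg]
    | smul a f _ hf => simp [map_smul, hf]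

end Aux5
section Aux6
variable {m : ℕ} {r : ℕ} {e1 fs : Fin m}
  (hpe : par r e1 = 0) (hef : e1 ≠ fs)

lemma P_lam {c : Fin m} (hc : c ≠ e1) (g : Cochain m) :
    Pfree e1 (lam [c] g) = lam [c] (Pfree e1 g) := by
  induction g using Finsupp.induction_linear with
  | zero => simp
  | add f g hf hg => simp [map_add, hf, hg]
  | single p b =>
    rw [lam_single, Pfree_single, Pfree_single]
    rw [show (([c] ++ p.1 : List (Fin m)), p.2) = ((c :: p.1 : List (Fin m)), p.2) from rfl]
    rw [apply_ite (lam [c]), map_zero, lam_single]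
    simp only [infix_cons_iff' hc]
    rfl

lemma E2P_lam {c : Fin m} (hc : c ≠ e1) (b' : Fin m) (g : Cochain m) :
    E2op e1 b' (Pfree e1 (lam [c] g)) = 0 := by
  induction g using Finsupp.induction_linear with
  | zero => simp
  | add f g hf hg => simp [map_add, hf, hg]
  | single p b =>
    rw [lam_single, Pfree_single]
    rw [show (([c] ++ p.1 : List (Fin m)), p.2) = ((c :: p.1 : List (Fin m)), p.2) from rfl]
    rw [apply_ite (E2op e1 b'), map_zero, E2op, LinearMap.comp_apply, E1op_single_cons,
      if_neg hc, map_zero, ite_self]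

include hef in
lemma E2P_theta (g : Cochain m) :
    E2op e1 fs (Pfree e1 (theta e1 fs g)) = Pfree e1 g := by
  induction g using Finsupp.induction_linear with
  | zero => simp
  | add f g hf hg => simp [map_add, hf, hg]
  | single p b =>
    rw [theta, LinearMap.sub_apply, lam_single, lam_single, map_sub, map_sub,
      Pfree_single, Pfree_single]
    rw [show (([e1, fs] ++ p.1 : List (Fin m)), p.2) = ((e1 :: fs :: p.1 : List (Fin m)), p.2) from rfl,
      show (([fs, e1] ++ p.1 : List (Fin m)), p.2) = ((fs :: e1 :: p.1 : List (Fin m)), p.2) from rfl]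
    have h2 : E2op e1 fs (if [e1, e1] <:+: (fs :: e1 :: p.1) then 0
        else Finsupp.single ((fs :: e1 :: p.1 : List (Fin m)), p.2) b) = 0 := by
      rw [apply_ite (E2op e1 fs), map_zero, E2op, LinearMap.comp_apply, E1op_single_cons,
        if_neg (Ne.symm hef), map_zero, ite_self]
    rw [h2, sub_zero, apply_ite (E2op e1 fs), map_zero, E2op, LinearMap.comp_apply,
      E1op_single_cons, if_pos rfl, E1op_single_cons, if_pos rfl, Pfree_single]
    simp only [infix_cons2_iff (Ne.symm hef)]

include hef in
lemma E2P_theta_ne {c : Fin m} (hc : c ≠ fs) (g : Cochain m) :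
    E2op e1 c (Pfree e1 (theta e1 fs g)) = 0 := by
  induction g using Finsupp.induction_linear with
  | zero => simp
  | add f g hf hg => simp [map_add, hf, hg]
  | single p b =>
    rw [theta, LinearMap.sub_apply, lam_single, lam_single, map_sub, map_sub,
      Pfree_single, Pfree_single]
    rw [show (([e1, fs] ++ p.1 : List (Fin m)), p.2) = ((e1 :: fs :: p.1 : List (Fin m)), p.2) from rfl,
      show (([fs, e1] ++ p.1 : List (Fin m)), p.2) = ((fs :: e1 :: p.1 : List (Fin m)), p.2) from rfl]
    have h2 : E2op e1 c (if [e1, e1] <:+: (fs :: e1 :: p.1) then 0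
        else Finsupp.single ((fs :: e1 :: p.1 : List (Fin m)), p.2) b) = 0 := by
      rw [apply_ite (E2op e1 c), map_zero, E2op, LinearMap.comp_apply, E1op_single_cons,
        if_neg (Ne.symm hef), map_zero, ite_self]
    have h1 : E2op e1 c (if [e1, e1] <:+: (e1 :: fs :: p.1) then 0
        else Finsupp.single ((e1 :: fs :: p.1 : List (Fin m)), p.2) b) = 0 := by
      rw [apply_ite (E2op e1 c), map_zero, E2op, LinearMap.comp_apply, E1op_single_cons,
        if_pos rfl, E1op_single_cons,
        if_neg (show ¬ (fs = c) from fun h => hc h.symm), ite_self]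
    rw [h1, h2, sub_zero]

include hpe in
lemma E2P_L {c' : Fin m} (hc' : c' ≠ e1) (b' : Fin m) (g : Cochain m) :
    E2op e1 b' (Pfree e1 ((lam [e1] + rho r [e1]) (lam [c'] g)))
      = if c' = b' then Pfree e1 g else 0 := by
  have hl1 : lpar r [e1] = 0 := by simp [lpar, hpe]
  induction g using Finsupp.induction_linear with
  | zero => simp
  | add f g hf hg =>
    simp only [map_add, hf, hg]
    split_ifs <;> simp
  | single p b =>
    rw [LinearMap.add_apply, lam_single, lam_single, rho_single, hl1, mul_zero, pow_zero,
      one_smul, map_add, map_add, Pfree_single, Pfree_single]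
    rw [show (([e1] ++ ([c'] ++ p.1) : List (Fin m)), p.2)
        = ((e1 :: c' :: p.1 : List (Fin m)), p.2) from rfl,
      show ((([c'] ++ p.1) ++ [e1] : List (Fin m)), p.2)
        = ((c' :: (p.1 ++ [e1]) : List (Fin m)), p.2) from by simp]
    have h2 : E2op e1 b' (if [e1, e1] <:+: (c' :: (p.1 ++ [e1])) then 0
        else Finsupp.single ((c' :: (p.1 ++ [e1]) : List (Fin m)), p.2) b) = 0 := by
      rw [apply_ite (E2op e1 b'), map_zero, E2op, LinearMap.comp_apply, E1op_single_cons,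
        if_neg hc', map_zero, ite_self]
    rw [h2, add_zero, apply_ite (E2op e1 b'), map_zero, E2op, LinearMap.comp_apply,
      E1op_single_cons, if_pos rfl, E1op_single_cons, Pfree_single]
    simp only [infix_cons2_iff hc']
    split_ifs <;> simp

lemma E1_lam (c c' : Fin m) (g : Cochain m) :
    E1op c (lam [c'] g) = if c' = c then g else 0 := by
  induction g using Finsupp.induction_linear with
  | zero => simp
  | add f g hf hg =>
    simp only [map_add, hf, hg]
    split_ifs <;> simp
  | single p b =>
    rw [lam_single,
      show (([c'] ++ p.1 : List (Fin m)), p.2) = ((c' :: p.1 : List (Fin m)), p.2) from rfl,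
      E1op_single_cons]

end Aux6
section Aux7
variable {m : ℕ}

/-- `L_c = (λ^{e1} + ρ^{e1}) ∘ λ^c`. -/
noncomputable def Lop (r : ℕ) (e1 c : Fin m) : Cochain m →ₗ[ℂ] Cochain m :=
  (lam [e1] + rho r [e1]) ∘ₗ lam [c]

/-- The head part of the left inverse of `Pfree` on `Chat`. -/
noncomputable def PhiA (r : ℕ) (e1 fs : Fin m) (F : Cochain m →ₗ[ℂ] Cochain m) :
    Cochain m →ₗ[ℂ] Cochain m :=
  theta e1 fs ∘ₗ F ∘ₗ E2op e1 fs
    + ∑ c ∈ Finset.univ.filter (fun c : Fin m => c ≠ e1 ∧ c ≠ fs),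
        Lop r e1 c ∘ₗ F ∘ₗ E2op e1 c

/-- The left inverse of `Pfree` on `Chat`. -/
noncomputable def Phi (r : ℕ) (e1 fs : Fin m) : ℕ → (Cochain m →ₗ[ℂ] Cochain m)
  | 0 => LinearMap.id
  | 1 => LinearMap.id
  | n + 2 =>
      PhiA r e1 fs (Phi r e1 fs n)
        + ∑ c ∈ Finset.univ.filter (fun c : Fin m => c ≠ e1 ∧ c ≠ fs),
            lam [c] ∘ₗ Phi r e1 fs (n + 1) ∘ₗ E1op c ∘ₗ
              (LinearMap.id - Pfree e1 ∘ₗ PhiA r e1 fs (Phi r e1 fs n))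

variable {r : ℕ} {e1 fs : Fin m}
  (hpe : par r e1 = 0) (hef : e1 ≠ fs)

include hpe hef in
lemma PhiP (x : Fin m) : ∀ n, ∀ z ∈ Chat r e1 fs x n, Phi r e1 fs n (Pfree e1 z) = z := by
  have key : ∀ n, Chat r e1 fs x n ≤
      LinearMap.ker (Phi r e1 fs n ∘ₗ Pfree e1 - LinearMap.id) := by
    intro n
    induction n using Nat.strong_induction_on with
    | _ n ih =>
      have ihz : ∀ k, k < n → ∀ z ∈ Chat r e1 fs x k, Phi r e1 fs k (Pfree e1 z) = z := by
        intro k hk z hz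
        have := ih k hk hz
        rw [LinearMap.mem_ker, LinearMap.sub_apply, LinearMap.comp_apply,
          LinearMap.id_apply, sub_eq_zero] at this
        exact this
      match n with
      | 0 =>
        rw [Chat, Submodule.span_le]
        rintro f rfl
        rw [SetLike.mem_coe, LinearMap.mem_ker, LinearMap.sub_apply, LinearMap.comp_apply,
          LinearMap.id_apply, sub_eq_zero, Pfree_single, if_neg (not_infix_nil e1), Phi,
          LinearMap.id_apply]
      | 1 =>
        rw [Chat, Submodule.span_le]
        rintro f (rfl | hf)
        · rw [SetLike.mem_coe, LinearMap.mem_ker, LinearMap.sub_apply, LinearMap.comp_apply,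
            LinearMap.id_apply, sub_eq_zero, Pfree_single, if_neg (not_infix_single e1 e1), Phi,
            LinearMap.id_apply]
        · simp only [Set.mem_iUnion] at hf
          obtain ⟨c, hc, v, hv, rfl⟩ := hf
          rw [SetLike.mem_coe, LinearMap.mem_ker, LinearMap.sub_apply, LinearMap.comp_apply,
            LinearMap.id_apply, sub_eq_zero, P_lam hc.1, Phi, LinearMap.id_apply]
          have h0 : Pfree e1 v = v := by
            have := ihz 0 (by omega) v hv
            rwa [Phi, LinearMap.id_apply] at this
          rw [h0]
      | (k + 2) =>
        rw [Chat, Submodule.span_le]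
        have hS : ∀ c : Fin m, (c ≠ e1 ∧ c ≠ fs) →
            c ∈ Finset.univ.filter (fun c : Fin m => c ≠ e1 ∧ c ≠ fs) := by
          intro c hc; exact Finset.mem_filter.mpr ⟨Finset.mem_univ c, hc⟩
        rintro f ((hf | hf) | hf) <;>
          rw [SetLike.mem_coe, LinearMap.mem_ker, LinearMap.sub_apply, LinearMap.comp_apply,
            LinearMap.id_apply, sub_eq_zero, Phi]
        -- case λ^c u
        · simp only [Set.mem_iUnion] at hf
          obtain ⟨c₀, hc₀, u, hu, rfl⟩ := hf
          have hA : PhiA r e1 fs (Phi r e1 fs k) (Pfree e1 (lam [c₀] u)) = 0 := by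
            rw [PhiA, LinearMap.add_apply, LinearMap.comp_apply, LinearMap.comp_apply,
              E2P_lam hc₀.1, map_zero, map_zero, LinearMap.sum_apply, zero_add]
            refine Finset.sum_eq_zero fun c hc => ?_
            rw [LinearMap.comp_apply, LinearMap.comp_apply, E2P_lam hc₀.1, map_zero, map_zero]
          rw [LinearMap.add_apply, hA, LinearMap.sum_apply, zero_add]
          rw [Finset.sum_eq_single c₀]
          · rw [LinearMap.comp_apply, LinearMap.comp_apply, LinearMap.comp_apply,
              LinearMap.sub_apply, LinearMap.id_apply, LinearMap.comp_apply, hA, map_zero,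
              sub_zero, P_lam hc₀.1, E1_lam, if_pos rfl, ihz (k + 1) (by omega) u hu]
          · intro c hc hne
            rw [LinearMap.comp_apply, LinearMap.comp_apply, LinearMap.comp_apply,
              LinearMap.sub_apply, LinearMap.id_apply, LinearMap.comp_apply, hA, map_zero,
              sub_zero, P_lam hc₀.1, E1_lam, if_neg (fun h => hne h.symm), map_zero, map_zero]
          · intro hn; exact absurd (hS c₀ hc₀) hn
        -- case θ v
        · obtain ⟨v, hv, rfl⟩ := hf
          have hA : PhiA r e1 fs (Phi r e1 fs k) (Pfree e1 (theta e1 fs v))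
              = theta e1 fs v := by
            rw [PhiA, LinearMap.add_apply, LinearMap.comp_apply, LinearMap.comp_apply,
              E2P_theta hef, ihz k (by omega) v hv, LinearMap.sum_apply]
            have : ∑ c ∈ Finset.univ.filter (fun c : Fin m => c ≠ e1 ∧ c ≠ fs),
                (Lop r e1 c ∘ₗ Phi r e1 fs k ∘ₗ E2op e1 c) (Pfree e1 (theta e1 fs v)) = 0 := by
              refine Finset.sum_eq_zero fun c hc => ?_
              have hc' := (Finset.mem_filter.mp hc).2
              rw [LinearMap.comp_apply, LinearMap.comp_apply, E2P_theta_ne hef hc'.2,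
                map_zero, map_zero]
            rw [this, add_zero]
          rw [LinearMap.add_apply, hA, LinearMap.sum_apply]
          have : ∑ c ∈ Finset.univ.filter (fun c : Fin m => c ≠ e1 ∧ c ≠ fs),
              (lam [c] ∘ₗ Phi r e1 fs (k + 1) ∘ₗ E1op c ∘ₗ
                (LinearMap.id - Pfree e1 ∘ₗ PhiA r e1 fs (Phi r e1 fs k)))
                (Pfree e1 (theta e1 fs v)) = 0 := by
            refine Finset.sum_eq_zero fun c hc => ?_
            rw [LinearMap.comp_apply, LinearMap.comp_apply, LinearMap.comp_apply,
              LinearMap.sub_apply, LinearMap.id_apply, LinearMap.comp_apply, hA, sub_self,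
              map_zero, map_zero, map_zero]
          rw [this, add_zero]
        -- case L_c w
        · simp only [Set.mem_iUnion] at hf
          obtain ⟨c₀, hc₀, v, hv, rfl⟩ := hf
          obtain ⟨w, hw, rfl⟩ := hv
          have hz : (lam [e1] + rho r [e1]) (lam [c₀] w) = Lop r e1 c₀ w := rfl
          have hA : PhiA r e1 fs (Phi r e1 fs k)
              (Pfree e1 ((lam [e1] + rho r [e1]) (lam [c₀] w))) = Lop r e1 c₀ w := by
            rw [PhiA, LinearMap.add_apply, LinearMap.comp_apply, LinearMap.comp_apply,
              E2P_L hpe hc₀.1, if_neg hc₀.2, map_zero, map_zero, zero_add,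
              LinearMap.sum_apply, Finset.sum_eq_single c₀]
            · rw [LinearMap.comp_apply, LinearMap.comp_apply, E2P_L hpe hc₀.1, if_pos rfl,
                ihz k (by omega) w hw]
            · intro c hc hne
              rw [LinearMap.comp_apply, LinearMap.comp_apply, E2P_L hpe hc₀.1, if_neg (fun h => hne h.symm),
                map_zero, map_zero]
            · intro hn; exact absurd (hS c₀ hc₀) hn
          rw [LinearMap.add_apply, hA, LinearMap.sum_apply]
          have : ∑ c ∈ Finset.univ.filter (fun c : Fin m => c ≠ e1 ∧ c ≠ fs),
              (lam [c] ∘ₗ Phi r e1 fs (k + 1) ∘ₗ E1op c ∘ₗ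
                (LinearMap.id - Pfree e1 ∘ₗ PhiA r e1 fs (Phi r e1 fs k)))
                (Pfree e1 ((lam [e1] + rho r [e1]) (lam [c₀] w))) = 0 := by
            refine Finset.sum_eq_zero fun c hc => ?_
            rw [LinearMap.comp_apply, LinearMap.comp_apply, LinearMap.comp_apply,
              LinearMap.sub_apply, LinearMap.id_apply, LinearMap.comp_apply, hA, hz, sub_self,
              map_zero, map_zero, map_zero]
          rw [this, add_zero, hz]
  intro n z hz
  have := key n hz
  rw [LinearMap.mem_ker, LinearMap.sub_apply, LinearMap.comp_apply,
    LinearMap.id_apply, sub_eq_zero] at this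
  exact this

end Aux7
/-- `Ĉ^n_x` consists of nontrivial cocycles of the restricted complex:
`Ĉ^n_x ⊆ ker D_x` and `Ĉ^n_x ∩ im D_x = 0`. -/
theorem Chat_nontrivial_cocycles (r s : ℕ) (hr : 1 ≤ r) (hs : 1 ≤ s)
    (e1 fs : Fin (r + s)) (he1 : (e1 : ℕ) = 0) (hfs : (fs : ℕ) = r + s - 1) :
    ∀ x : Fin (r + s), ∀ n : ℕ,
      Chat r e1 fs x n ≤ LinearMap.ker (Dx r e1 fs x) ∧
      Chat r e1 fs x n ⊓ Bx r e1 fs x n = ⊥ := by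
  have hpe : par r e1 = 0 := by
    have h : (e1 : ℕ) < r := by omega
    simp [par, h]
  have hpf : par r fs = 1 := by
    have h : ¬ ((fs : ℕ) < r) := by omega
    simp [par, h]
  have hef : e1 ≠ fs := by
    intro h
    apply_fun (Fin.val) at h
    omega
  intro x n
  refine ⟨Chat_le_ker hpe hpf hef x n, ?_⟩
  rw [eq_bot_iff]
  rintro z hz
  rw [Submodule.mem_inf] at hz
  have h1 := PhiP hpe hef x n z hz.1
  have h2 : Pfree e1 z = 0 := LinearMap.mem_ker.mp (Bx_le_kerP hpe hpf hef x n hz.2)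
  rw [Submodule.mem_bot]
  rw [h2, map_zero] at h1
  exact h1.symm

end NilpotentCohomology
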